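/- Let V be a real vector space with inner products a and s and let π be the s-orthogonal projection onto a finite-dimensional subspace V_aux. Suppose D > 0 is such that for every v_aux ∈ V_aux there is q ∈ V with π(q) = v_aux and a(q,q) ≤ D s(v_aux, v_aux). If η ∈ V satisfies a(η, v) + s(π η, π v) = s(v_aux, π v) for all v ∈ V for some fixed v_aux ∈ V_aux, then s(v_aux, v_aux) ≤ (1 + D)^{1/2} (a(η,η) + s(π η, π η))^{1/2} s(v_aux, v_aux)^{1/2}, and hence s(v_aux, v_aux) ≤ (1 + D)(a(η,η) + s(π η, π η)). -/
import Mathlib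


/-- abstract coefficient estimate from Step 2 of the convergence proof. -/
theorem stmt13 {V : Type*} [AddCommGroup V] [Module ℝ V]
    (a s : LinearMap.BilinForm ℝ V)
    (ha_symm : ∀ u v, a u v = a v u) (ha_pos : ∀ v, v ≠ 0 → 0 < a v v)
    (hs_symm : ∀ u v, s u v = s v u) (hs_pos : ∀ v, v ≠ 0 → 0 < s v v)
    (Vaux : Submodule ℝ V) [FiniteDimensional ℝ Vaux]
    (π : V →ₗ[ℝ] V)
    (hπ_range : ∀ v, π v ∈ Vaux)
    (hπ_id : ∀ v ∈ Vaux, π v = v)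
    (hπ_selfadj : ∀ u v, s (π u) v = s u (π v))
    (D : ℝ) (hD : 0 < D)
    (hsurj : ∀ vaux ∈ Vaux, ∃ q : V, π q = vaux ∧ a q q ≤ D * s vaux vaux)
    (η vaux : V) (hvaux : vaux ∈ Vaux)
    (hvar : ∀ v, a η v + s (π η) (π v) = s vaux (π v)) :
    s vaux vaux ≤ Real.sqrt (1 + D) * Real.sqrt (a η η + s (π η) (π η)) *
      Real.sqrt (s vaux vaux) ∧
    s vaux vaux ≤ (1 + D) * (a η η + s (π η) (π η)) := by
  have ha0 : ∀ v, 0 ≤ a v v := by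
    intro v
    rcases eq_or_ne v 0 with h | h
    · simp [h]
    · exact (ha_pos v h).le
  have hs0 : ∀ v, 0 ≤ s v v := by
    intro v
    rcases eq_or_ne v 0 with h | h
    · simp [h]
    · exact (hs_pos v h).le
  obtain ⟨q, hq, hqa⟩ := hsurj vaux hvaux
  have hC0 : 0 ≤ a η η + s (π η) (π η) := add_nonneg (ha0 _) (hs0 _)
  have hA0 : 0 ≤ a q q + s (π q) (π q) := add_nonneg (ha0 _) (hs0 _)
  have hS0 : 0 ≤ s vaux vaux := hs0 _
  -- variational identity with v = q
  have hXS : a η q + s (π η) (π q) = s vaux vaux := by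
    have h := hvar q
    rw [hq] at h
    rw [hq]
    exact h
  -- Cauchy–Schwarz for the combined bilinear form, via nonnegative quadratic
  have hquad : ∀ t : ℝ, 0 ≤ (a q q + s (π q) (π q)) * (t * t)
      + (2 * (a η q + s (π η) (π q))) * t + (a η η + s (π η) (π η)) := by
    intro t
    have h1 : 0 ≤ a (η + t • q) (η + t • q) + s (π (η + t • q)) (π (η + t • q)) :=
      add_nonneg (ha0 _) (hs0 _)
    have e1 : a (η + t • q) (η + t • q)
        = a η η + 2 * t * a η q + (t * t) * a q q := by
      simp only [map_add, map_smul, LinearMap.add_apply, LinearMap.smul_apply,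
        smul_eq_mul]
      rw [ha_symm q η]; ring
    have e2 : s (π (η + t • q)) (π (η + t • q))
        = s (π η) (π η) + 2 * t * s (π η) (π q) + (t * t) * s (π q) (π q) := by
      simp only [map_add, map_smul, LinearMap.add_apply, LinearMap.smul_apply,
        smul_eq_mul]
      rw [hs_symm (π q) (π η)]; ring
    rw [e1, e2] at h1
    nlinarith [h1]
  have hdisc := discrim_le_zero hquad
  rw [discrim] at hdisc
  have hcs : (a η q + s (π η) (π q)) ^ 2
      ≤ (a η η + s (π η) (π η)) * (a q q + s (π q) (π q)) := by nlinarith [hdisc]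
  -- bound on a q q + s (π q) (π q)
  have hAle : a q q + s (π q) (π q) ≤ (1 + D) * s vaux vaux := by
    have hqq : s (π q) (π q) = s vaux vaux := by rw [hq]
    rw [hqq]
    nlinarith [hqa]
  have h1D : (0:ℝ) ≤ 1 + D := by linarith
  -- first inequality
  have key : s vaux vaux ≤ Real.sqrt (1 + D) * Real.sqrt (a η η + s (π η) (π η)) *
      Real.sqrt (s vaux vaux) := by
    have h1 : s vaux vaux ≤ Real.sqrt ((a η q + s (π η) (π q)) ^ 2) := by
      rw [Real.sqrt_sq_eq_abs, ← hXS]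
      exact le_abs_self _
    have h2 := Real.sqrt_le_sqrt hcs
    have h3 : Real.sqrt ((a η η + s (π η) (π η)) * (a q q + s (π q) (π q)))
        ≤ Real.sqrt ((a η η + s (π η) (π η)) * ((1 + D) * s vaux vaux)) := by
      apply Real.sqrt_le_sqrt
      nlinarith [hC0, hAle]
    have h4 : Real.sqrt ((a η η + s (π η) (π η)) * ((1 + D) * s vaux vaux))
        = Real.sqrt (1 + D) * Real.sqrt (a η η + s (π η) (π η)) *
          Real.sqrt (s vaux vaux) := by
      rw [Real.sqrt_mul hC0, Real.sqrt_mul h1D]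
      ring
    linarith [h1, h2, h3, h4.le, h4.ge]
  refine ⟨key, ?_⟩
  -- second inequality
  rcases eq_or_lt_of_le hS0 with h0 | h0
  · rw [← h0]
    positivity
  · have hsq : Real.sqrt (s vaux vaux) > 0 := Real.sqrt_pos.mpr h0
    have hS : s vaux vaux = Real.sqrt (s vaux vaux) * Real.sqrt (s vaux vaux) :=
      (Real.mul_self_sqrt hS0).symm
    have hle : Real.sqrt (s vaux vaux)
        ≤ Real.sqrt (1 + D) * Real.sqrt (a η η + s (π η) (π η)) := by
      have h := key
      rw [hS] at h
      exact le_of_mul_le_mul_right (by linarith [h]) hsq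
    have h5 : s vaux vaux
        ≤ (Real.sqrt (1 + D) * Real.sqrt (a η η + s (π η) (π η))) ^ 2 := by
      rw [hS]
      nlinarith [Real.sqrt_nonneg (s vaux vaux), hle,
        mul_nonneg (Real.sqrt_nonneg (1 + D)) (Real.sqrt_nonneg (a η η + s (π η) (π η)))]
    calc s vaux vaux ≤ (Real.sqrt (1 + D) * Real.sqrt (a η η + s (π η) (π η))) ^ 2 := h5
      _ = (1 + D) * (a η η + s (π η) (π η)) := by
          rw [mul_pow, Real.sq_sqrt h1D, Real.sq_sqrt hC0]
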